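/- Let Γ be a random symmetric d×d matrix with 0 ⪯ Γ ⪯ I_d almost surely and finite moments, and let Γ⁽¹⁾,…,Γ⁽ⁿ⁾ be i.i.d. copies. Let Γ̃ = √((1/n)Σᵢ(Γ⁽ⁱ⁾)²). Then Γ̃ ⪰ (1/n)Σᵢ Γ⁽ⁱ⁾ almost surely, and consequently Tr(E[Γ²] − E[Γ̃]²) ≤ Tr(E[Γ²] − E[Γ]²). -/

import Mathlib

open MeasureTheory ProbabilityTheory
open scoped Classical

instance matrixMeasurableSpace {m n : Type*} :
    MeasurableSpace (Matrix m n ℝ) :=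
  inferInstanceAs (MeasurableSpace (m → n → ℝ))

/-- The PSD square root of a matrix (zero if the matrix is not PSD). -/
noncomputable def psdSqrt {d : ℕ} (M : Matrix (Fin d) (Fin d) ℝ) :
    Matrix (Fin d) (Fin d) ℝ :=
  if h : M.PosSemidef then
    h.1.eigenvectorUnitary.1 * Matrix.diagonal ((↑) ∘ (√·) ∘ h.1.eigenvalues) *
      (star h.1.eigenvectorUnitary : Matrix (Fin d) (Fin d) ℝ)
  else 0

/-- Entrywise (Bochner) integral of a matrix-valued map. -/
noncomputable def matInt {Ω : Type*} [MeasurableSpace Ω] (μ : Measure Ω) {d : ℕ}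
    (f : Ω → Matrix (Fin d) (Fin d) ℝ) : Matrix (Fin d) (Fin d) ℝ :=
  Matrix.of fun i j => ∫ ω, f ω i j ∂μ

section Auxiliary

open Matrix

lemma psdSqrt_spec {d : ℕ} {B : Matrix (Fin d) (Fin d) ℝ} (hB : B.PosSemidef) :
    (psdSqrt B).PosSemidef ∧ psdSqrt B * psdSqrt B = B := by
  rw [psdSqrt, dif_pos hB]
  set U : Matrix (Fin d) (Fin d) ℝ := hB.1.eigenvectorUnitary.1 with hUdef
  set D : Matrix (Fin d) (Fin d) ℝ :=
    Matrix.diagonal ((↑) ∘ (√·) ∘ hB.1.eigenvalues) with hDdef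
  have hU : star U * U = 1 := (Matrix.mem_unitaryGroup_iff').mp hB.1.eigenvectorUnitary.2
  constructor
  · have hD : D.PosSemidef := PosSemidef.diagonal (fun i => by simp)
    have := hD.mul_mul_conjTranspose_same U
    simpa [star_eq_conjTranspose] using this
  · conv_rhs => rw [hB.1.spectral_theorem, Unitary.conjStarAlgAut_apply]
    rw [show U * D * star U * (U * D * star U) = U * D * (star U * U) * D * star U by
      simp only [Matrix.mul_assoc], hU, Matrix.mul_one, hDdef, Matrix.mul_assoc U, diagonal_mul_diagonal]
    congr 3
    funext i
    simp [Real.mul_self_sqrt (hB.eigenvalues_nonneg i)]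

/-- Monotonicity of the PSD square root: if `A` is PSD and `A² ⪯ B`, then `A ⪯ √B`. -/
lemma sqrt_sub_posSemidef {d : ℕ} {A B : Matrix (Fin d) (Fin d) ℝ}
    (hA : A.PosSemidef) (hB : B.PosSemidef) (h : (B - A ^ 2).PosSemidef) :
    (psdSqrt B - A).PosSemidef := by
  classical
  set S := psdSqrt B with hSdef
  have hS : S.PosSemidef := (psdSqrt_spec hB).1
  have hM : (S - A).IsHermitian := hS.1.sub hA.1
  refine hM.posSemidef_iff_eigenvalues_nonneg.mpr fun i => ?_
  by_contra hlt
  push_neg at hlt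
  rw [Pi.zero_apply] at hlt
  set t := hM.eigenvalues i with ht
  set v : Fin d → ℝ := ⇑(hM.eigenvectorBasis i) with hvdef
  have hv : (S - A) *ᵥ v = t • v := hM.mulVec_eigenvectorBasis i
  have hv0 : v ≠ 0 := by
    intro hz
    exact hM.eigenvectorBasis.orthonormal.ne_zero i (by ext j; exact congrFun hz j)
  have hstar : star v = v := star_trivial v
  have hq : 0 ≤ v ⬝ᵥ (B - A ^ 2) *ᵥ v := by simpa [hstar] using h.dotProduct_mulVec_nonneg v
  have hid : B - A ^ 2 = S * (S - A) + (S - A) * A := by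
    rw [mul_sub, sub_mul, ← (psdSqrt_spec hB).2]
    noncomm_ring
  have hvm : v ᵥ* (S - A) = t • v := by
    have := congrArg (fun M => M *ᵥ v) hM.eq
    simp only [conjTranspose_eq_transpose_of_trivial] at this
    rw [← mulVec_transpose, this, hv]
  have e1 : v ⬝ᵥ (B - A ^ 2) *ᵥ v = t * (v ⬝ᵥ S *ᵥ v + v ⬝ᵥ A *ᵥ v) := by
    rw [hid, add_mulVec, dotProduct_add, ← mulVec_mulVec, ← mulVec_mulVec, hv,
      mulVec_smul, dotProduct_smul, dotProduct_mulVec _ (S - A), hvm, smul_dotProduct]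
    simp [smul_eq_mul, mul_add]
  have hqS : 0 ≤ v ⬝ᵥ S *ᵥ v := by simpa [hstar] using hS.dotProduct_mulVec_nonneg v
  have hqA : 0 ≤ v ⬝ᵥ A *ᵥ v := by simpa [hstar] using hA.dotProduct_mulVec_nonneg v
  have hsum : v ⬝ᵥ S *ᵥ v + v ⬝ᵥ A *ᵥ v = 0 := by nlinarith [hq, e1]
  have hSz : S *ᵥ v = 0 := (hS.dotProduct_mulVec_zero_iff v).mp (by rw [hstar]; linarith)
  have hAz : A *ᵥ v = 0 := (hA.dotProduct_mulVec_zero_iff v).mp (by rw [hstar]; linarith)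
  have : t • v = 0 := by rw [← hv, sub_mulVec, hSz, hAz, sub_zero]
  rcases smul_eq_zero.mp this with h1 | h1
  · exact absurd h1 (ne_of_lt hlt)
  · exact hv0 h1

lemma psd_smul {d : ℕ} {M : Matrix (Fin d) (Fin d) ℝ} (hM : M.PosSemidef) {c : ℝ}
    (hc : 0 ≤ c) : (c • M).PosSemidef := by
  refine PosSemidef.of_dotProduct_mulVec_nonneg ?_ fun x => ?_
  · unfold Matrix.IsHermitian
    rw [conjTranspose_smul, hM.1.eq]
    simp
  · rw [smul_mulVec, dotProduct_smul]
    exact mul_nonneg hc (hM.dotProduct_mulVec_nonneg x)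

lemma psd_sum {d : ℕ} {ι : Type*} [Fintype ι] (f : ι → Matrix (Fin d) (Fin d) ℝ)
    (h : ∀ i, (f i).PosSemidef) : (∑ i, f i).PosSemidef :=
  Finset.sum_induction f _ (fun _ _ ha hb => ha.add hb) .zero (fun i _ => h i)

lemma psd_trace_nonneg {d : ℕ} {M : Matrix (Fin d) (Fin d) ℝ} (hM : M.PosSemidef) :
    0 ≤ M.trace := by
  rw [Matrix.trace]
  refine Finset.sum_nonneg fun i _ => ?_
  have := hM.dotProduct_mulVec_nonneg (Pi.single i 1)
  simpa [Matrix.diag, dotProduct, mulVec, Pi.single_apply, Finset.mul_sum] using this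

lemma psd_trace_mul_nonneg {d : ℕ} {P Q : Matrix (Fin d) (Fin d) ℝ}
    (hP : P.PosSemidef) (hQ : Q.PosSemidef) : 0 ≤ (P * Q).trace := by
  obtain ⟨B, rfl⟩ : ∃ B : Matrix (Fin d) (Fin d) ℝ, P = Bᵀ * B := ⟨psdSqrt P, by
    rw [← conjTranspose_eq_transpose_of_trivial, (psdSqrt_spec hP).1.1.eq, (psdSqrt_spec hP).2]⟩
  rw [Matrix.mul_assoc, trace_mul_comm]
  exact psd_trace_nonneg (hQ.mul_mul_conjTranspose_same B)

lemma trace_sq_le_trace_sq {d : ℕ} {X Y : Matrix (Fin d) (Fin d) ℝ}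
    (hX : X.PosSemidef) (hXY : (Y - X).PosSemidef) :
    (X ^ 2).trace ≤ (Y ^ 2).trace := by
  have hYX : (Y + X).PosSemidef := by
    have : Y + X = (Y - X) + X + X := by abel
    rw [this]
    exact (hXY.add hX).add hX
  have h := psd_trace_mul_nonneg hXY hYX
  have e : (Y - X) * (Y + X) = Y ^ 2 - X ^ 2 + (Y * X - X * Y) := by noncomm_ring
  rw [e, trace_add, trace_sub, trace_sub, trace_mul_comm] at h
  linarith

lemma hermitian_sq_psd {d : ℕ} {M : Matrix (Fin d) (Fin d) ℝ} (hM : M.IsHermitian) :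
    (M ^ 2).PosSemidef := by
  have := posSemidef_conjTranspose_mul_self M
  rwa [hM.eq, ← sq] at this

/-- The deterministic core of the first claim. -/
lemma pointwise_key {d n : ℕ} (hn : 0 < n) (X : Fin n → Matrix (Fin d) (Fin d) ℝ)
    (hX : ∀ k, (X k).PosSemidef) :
    (psdSqrt ((n : ℝ)⁻¹ • ∑ k, (X k) ^ 2) - (n : ℝ)⁻¹ • ∑ k, X k).PosSemidef := by
  have hnR : (0:ℝ) < (n:ℝ) := by exact_mod_cast hn
  set A := (n : ℝ)⁻¹ • ∑ k, X k with hAdef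
  set B := (n : ℝ)⁻¹ • ∑ k, (X k) ^ 2 with hBdef
  have hA : A.PosSemidef := psd_smul (psd_sum _ hX) (by positivity)
  have hB : B.PosSemidef := psd_smul (psd_sum _ (fun k => (hX k).pow 2)) (by positivity)
  have hsum : ∑ k, X k = (n : ℝ) • A := by
    rw [hAdef, smul_smul, mul_inv_cancel₀ hnR.ne', one_smul]
  have expand : ∑ k, (X k - A) ^ 2 = (∑ k, (X k) ^ 2) - (n : ℝ) • A ^ 2 := by
    simp only [sq, sub_mul, mul_sub, Finset.sum_sub_distrib, ← Finset.sum_mul,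
      ← Finset.mul_sum, hsum, Finset.sum_const, Finset.card_univ, Fintype.card_fin,
      smul_mul_assoc, mul_smul_comm]
    rw [← Nat.cast_smul_eq_nsmul ℝ n (A * A)]
    abel
  have hBA : (B - A ^ 2).PosSemidef := by
    have e : B - A ^ 2 = (n : ℝ)⁻¹ • ∑ k, (X k - A) ^ 2 := by
      rw [expand, smul_sub, smul_smul, inv_mul_cancel₀ hnR.ne', one_smul, hBdef]
    rw [e]
    exact psd_smul (psd_sum _ (fun k => hermitian_sq_psd ((hX k).1.sub hA.1))) (by positivity)
  exact sqrt_sub_posSemidef hA hB hBA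

lemma dotProduct_mulVec_expand {d : ℕ} (x : Fin d → ℝ) (M : Matrix (Fin d) (Fin d) ℝ) :
    x ⬝ᵥ M *ᵥ x = ∑ i, ∑ j, x i * (M i j * x j) := by
  simp [dotProduct, mulVec, Finset.mul_sum]

lemma matInt_dotProduct {Ω : Type*} [MeasurableSpace Ω] (μ : Measure Ω) {d : ℕ}
    (f : Ω → Matrix (Fin d) (Fin d) ℝ)
    (hint : ∀ i j : Fin d, Integrable (fun ω => f ω i j) μ) (x : Fin d → ℝ) :
    x ⬝ᵥ (matInt μ f) *ᵥ x = ∫ ω, x ⬝ᵥ f ω *ᵥ x ∂μ := by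
  rw [dotProduct_mulVec_expand]
  have e1 : ∀ i j : Fin d, x i * ((matInt μ f) i j * x j)
      = ∫ ω, x i * (f ω i j * x j) ∂μ := by
    intro i j
    rw [matInt, of_apply, ← integral_mul_const, ← integral_const_mul]
  simp only [e1]
  have e2 : ∀ i : Fin d, ∑ j, ∫ ω, x i * (f ω i j * x j) ∂μ
      = ∫ ω, ∑ j, x i * (f ω i j * x j) ∂μ := fun i =>
    (integral_finset_sum _ fun j _ => ((hint i j).mul_const _).const_mul _).symm
  simp only [e2]
  rw [← integral_finset_sum _ (fun i _ =>
    integrable_finset_sum _ fun j _ => ((hint i j).mul_const _).const_mul _)]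
  exact integral_congr_ae (Filter.Eventually.of_forall fun ω =>
    (dotProduct_mulVec_expand x (f ω)).symm)

lemma matInt_psd {Ω : Type*} [MeasurableSpace Ω] (μ : Measure Ω) {d : ℕ}
    (f : Ω → Matrix (Fin d) (Fin d) ℝ)
    (hint : ∀ i j : Fin d, Integrable (fun ω => f ω i j) μ)
    (h : ∀ᵐ ω ∂μ, (f ω).PosSemidef) : (matInt μ f).PosSemidef := by
  refine PosSemidef.of_dotProduct_mulVec_nonneg ?_ ?_
  · ext i j
    have hsym : ∀ᵐ ω ∂μ, f ω j i = f ω i j := h.mono fun ω hω => by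
      have := congrFun (congrFun hω.1.eq i) j
      simpa using this
    simp only [conjTranspose_apply, matInt, of_apply, star_trivial]
    exact integral_congr_ae hsym
  · intro x
    rw [star_trivial, matInt_dotProduct μ f hint x]
    refine integral_nonneg_of_ae (h.mono fun ω hω => ?_)
    simpa using hω.dotProduct_mulVec_nonneg x

end Auxiliary

/-- For i.i.d. random symmetric matrices `0 ⪯ Γ⁽ⁱ⁾ ⪯ I` distributed as `Γ` and
`Γ̃ = √((1/n) Σᵢ (Γ⁽ⁱ⁾)²)`: almost surely `Γ̃ ⪰ (1/n) Σᵢ Γ⁽ⁱ⁾`, and consequently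
`Tr(E[Γ²] − E[Γ̃]²) ≤ Tr(E[Γ²] − E[Γ]²)`. -/
theorem stmt16 {Ω : Type*} [MeasurableSpace Ω] (μ : Measure Ω) [IsProbabilityMeasure μ]
    {d n : ℕ} (hn : 0 < n)
    (Γ : Ω → Matrix (Fin d) (Fin d) ℝ) (Γi : Fin n → Ω → Matrix (Fin d) (Fin d) ℝ)
    (hΓmeas : Measurable Γ) (hΓimeas : ∀ i, Measurable (Γi i))
    (hbd : ∀ᵐ ω ∂μ, (Γ ω).PosSemidef ∧ (1 - Γ ω).PosSemidef)
    (hbdi : ∀ i, ∀ᵐ ω ∂μ, (Γi i ω).PosSemidef ∧ (1 - Γi i ω).PosSemidef)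
    (hindep : iIndepFun (m := fun _ => matrixMeasurableSpace) Γi μ)
    (hident : ∀ i, Measure.map (Γi i) μ = Measure.map Γ μ)
    (hint : ∀ i j : Fin d, Integrable (fun ω => Γ ω i j) μ)
    (hint2 : ∀ i j : Fin d, Integrable (fun ω => ((Γ ω) ^ 2) i j) μ)
    (hinti : ∀ k, ∀ i j : Fin d, Integrable (fun ω => Γi k ω i j) μ)
    (hintt : ∀ i j : Fin d,
      Integrable (fun ω => psdSqrt ((n : ℝ)⁻¹ • ∑ k, (Γi k ω) ^ 2) i j) μ) :
    (∀ᵐ ω ∂μ,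
      (psdSqrt ((n : ℝ)⁻¹ • ∑ k, (Γi k ω) ^ 2) - (n : ℝ)⁻¹ • ∑ k, Γi k ω).PosSemidef) ∧
    ((matInt μ fun ω => (Γ ω) ^ 2)
        - (matInt μ fun ω => psdSqrt ((n : ℝ)⁻¹ • ∑ k, (Γi k ω) ^ 2)) ^ 2).trace
      ≤ ((matInt μ fun ω => (Γ ω) ^ 2) - (matInt μ Γ) ^ 2).trace := by
  have hnR : (0:ℝ) < (n:ℝ) := by exact_mod_cast hn
  set G : Ω → Matrix (Fin d) (Fin d) ℝ :=
    fun ω => psdSqrt ((n : ℝ)⁻¹ • ∑ k, (Γi k ω) ^ 2) with hGdef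
  set Av : Ω → Matrix (Fin d) (Fin d) ℝ :=
    fun ω => (n : ℝ)⁻¹ • ∑ k, Γi k ω with hAvdef
  have hae : ∀ᵐ ω ∂μ, ∀ k, (Γi k ω).PosSemidef :=
    ae_all_iff.mpr fun k => (hbdi k).mono fun ω h => h.1
  have part1 : ∀ᵐ ω ∂μ, (G ω - Av ω).PosSemidef :=
    hae.mono fun ω hω => pointwise_key hn (fun k => Γi k ω) hω
  refine ⟨part1, ?_⟩
  -- entrywise integrability of the average
  have hAvapp : ∀ (ω : Ω) (i j : Fin d), Av ω i j = (n : ℝ)⁻¹ * ∑ k, Γi k ω i j := by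
    intro ω i j
    simp [hAvdef, Matrix.smul_apply, Matrix.sum_apply]
  have hintA : ∀ i j : Fin d, Integrable (fun ω => Av ω i j) μ := by
    intro i j
    have : (fun ω => Av ω i j) = fun ω => (n : ℝ)⁻¹ * ∑ k, Γi k ω i j := by
      funext ω; exact hAvapp ω i j
    rw [this]
    exact (integrable_finset_sum _ fun k _ => hinti k i j).const_mul _
  -- the mean of each Γi equals the mean of Γ
  have hEik : ∀ (k : Fin n) (i j : Fin d), ∫ ω, Γi k ω i j ∂μ = ∫ ω, Γ ω i j ∂μ := by
    intro k i j
    have hev : Measurable fun M : Matrix (Fin d) (Fin d) ℝ => M i j :=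
      (measurable_pi_apply j).comp (measurable_pi_apply i)
    calc ∫ ω, Γi k ω i j ∂μ
        = ∫ M, M i j ∂(Measure.map (Γi k) μ) :=
          (integral_map (hΓimeas k).aemeasurable hev.aestronglyMeasurable).symm
      _ = ∫ M, M i j ∂(Measure.map Γ μ) := by rw [hident k]
      _ = ∫ ω, Γ ω i j ∂μ := integral_map hΓmeas.aemeasurable hev.aestronglyMeasurable
  have hEA : matInt μ Av = matInt μ Γ := by
    ext i j
    show ∫ ω, Av ω i j ∂μ = ∫ ω, Γ ω i j ∂μ
    simp only [hAvapp]
    rw [integral_const_mul, integral_finset_sum _ fun k _ => hinti k i j]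
    simp only [hEik]
    rw [Finset.sum_const, Finset.card_univ, Fintype.card_fin, nsmul_eq_mul, ← mul_assoc,
      inv_mul_cancel₀ hnR.ne', one_mul]
  have hsub : matInt μ (fun ω => G ω - Av ω) = matInt μ G - matInt μ Av := by
    ext i j
    show ∫ ω, (G ω - Av ω) i j ∂μ = _
    simp only [Matrix.sub_apply]
    rw [integral_sub (hintt i j) (hintA i j)]
    rfl
  have hdiffpsd : (matInt μ G - matInt μ Γ).PosSemidef := by
    rw [← hEA, ← hsub]
    exact matInt_psd μ _ (fun i j => (hintt i j).sub (hintA i j))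
      (part1.mono fun ω hω => by simpa [Matrix.sub_apply] using hω)
  have hEpsd : (matInt μ Γ).PosSemidef := matInt_psd μ Γ hint (hbd.mono fun ω h => h.1)
  have hkey := trace_sq_le_trace_sq hEpsd hdiffpsd
  rw [Matrix.trace_sub, Matrix.trace_sub]
  linarith
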